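/- Let Φ : ℝ³ → ℝ³ be an injective C¹ map and let ρ₀, ρ : ℝ³ → ℝ be continuous nonnegative functions. If mass is conserved, i.e. for every measurable set E ⊆ ℝ³ one has ∫_{Φ(E)} ρ dλ = ∫_E ρ₀ dλ (λ Lebesgue measure), then for every a ∈ ℝ³ the density equation ρ(Φ(a)) · |det DΦ(a)| = ρ₀(a) holds, where DΦ(a) is the 3×3 Jacobian matrix of Φ at a. -/

import Mathlib

open MeasureTheory

/-- If two continuous functions have equal integrals over all measurable sets,
then one is pointwise ≤ the other. -/
lemma le_of_setIntegral_eq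
    (g h : (Fin 3 → ℝ) → ℝ) (hg : Continuous g) (hh : Continuous h)
    (heq : ∀ E : Set (Fin 3 → ℝ), MeasurableSet E → ∫ x in E, g x = ∫ x in E, h x)
    (a : Fin 3 → ℝ) : g a ≤ h a := by
  by_contra hlt
  push_neg at hlt
  set d : (Fin 3 → ℝ) → ℝ := fun x => g x - h x with hd
  have hdc : Continuous d := hg.sub hh
  have hda : 0 < d a := by simp [hd]; linarith
  -- find a ball where d ≥ d a / 2
  have hopen : IsOpen {x | d a / 2 < d x} := isOpen_lt continuous_const hdc
  have hmem : a ∈ {x | d a / 2 < d x} := by simp; linarith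
  obtain ⟨r, hr, hball⟩ := Metric.isOpen_iff.1 hopen a hmem
  have hBmeas : MeasurableSet (Metric.ball a r) := measurableSet_ball
  have hBfin : volume (Metric.ball a r) ≠ ⊤ := measure_ball_lt_top.ne
  have hBpos : 0 < volume (Metric.ball a r) := Metric.measure_ball_pos _ _ hr
  have hdint : IntegrableOn d (Metric.ball a r) volume :=
    (hdc.continuousOn.integrableOn_compact (ProperSpace.isCompact_closedBall a r)).mono_set
      Metric.ball_subset_closedBall
  have hge : d a / 2 * (volume (Metric.ball a r)).toReal ≤ ∫ x in Metric.ball a r, d x :=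
    setIntegral_ge_of_const_le_real hBmeas hBfin (fun x hx => (hball hx).le) hdint
  have hzero : ∫ x in Metric.ball a r, d x = 0 := by
    have hgint : IntegrableOn g (Metric.ball a r) volume :=
      (hg.continuousOn.integrableOn_compact (ProperSpace.isCompact_closedBall a r)).mono_set
        Metric.ball_subset_closedBall
    have hhint : IntegrableOn h (Metric.ball a r) volume :=
      (hh.continuousOn.integrableOn_compact (ProperSpace.isCompact_closedBall a r)).mono_set
        Metric.ball_subset_closedBall
    rw [hd]
    rw [integral_sub hgint hhint, heq _ hBmeas, sub_self]
  rw [hzero] at hge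
  have : 0 < d a / 2 * (volume (Metric.ball a r)).toReal := by
    apply mul_pos (by linarith)
    exact ENNReal.toReal_pos hBpos.ne' hBfin
  linarith

/-- Hankel's density equation (§2, eq. (1)): if mass is conserved under the
C¹ injective map `Φ`, then `ρ(Φ a) · |det DΦ(a)| = ρ₀(a)`. -/
theorem hankel_density_equation
    (Φ : (Fin 3 → ℝ) → (Fin 3 → ℝ)) (ρ₀ ρ : (Fin 3 → ℝ) → ℝ)
    (hΦ : ContDiff ℝ 1 Φ) (hΦinj : Function.Injective Φ)
    (hρ₀c : Continuous ρ₀) (hρc : Continuous ρ)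
    (hρ₀nn : ∀ a, 0 ≤ ρ₀ a) (hρnn : ∀ x, 0 ≤ ρ x)
    (hmass : ∀ E : Set (Fin 3 → ℝ), MeasurableSet E →
      ∫ x in Φ '' E, ρ x = ∫ a in E, ρ₀ a) :
    ∀ a : Fin 3 → ℝ,
      ρ (Φ a) * |(Matrix.of fun i j => fderiv ℝ Φ a (Pi.single j 1) i).det| = ρ₀ a := by
  intro a
  set g : (Fin 3 → ℝ) → ℝ := fun x => |(fderiv ℝ Φ x).det| * ρ (Φ x) with hgdef
  have hdiff : ∀ x, HasFDerivAt Φ (fderiv ℝ Φ x) x := fun x =>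
    (hΦ.differentiable one_ne_zero x).hasFDerivAt
  have hgc : Continuous g :=
    ((ContinuousLinearMap.continuous_det.comp (hΦ.continuous_fderiv one_ne_zero)).abs).mul
      (hρc.comp hΦ.continuous)
  have heq : ∀ E : Set (Fin 3 → ℝ), MeasurableSet E →
      ∫ x in E, g x = ∫ x in E, ρ₀ x := by
    intro E hE
    have := integral_image_eq_integral_abs_det_fderiv_smul volume hE
      (fun x _ => (hdiff x).hasFDerivWithinAt) (hΦinj.injOn) ρ
    rw [← hmass E hE, this]
    simp [hgdef, smul_eq_mul]
  have hptwise : g a = ρ₀ a :=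
    le_antisymm (le_of_setIntegral_eq g ρ₀ hgc hρ₀c heq a)
      (le_of_setIntegral_eq ρ₀ g hρ₀c hgc (fun E hE => (heq E hE).symm) a)
  have hmat : (Matrix.of fun i j => fderiv ℝ Φ a (Pi.single j 1) i).det
      = (fderiv ℝ Φ a).det := by
    rw [show (Matrix.of fun i j => fderiv ℝ Φ a (Pi.single j 1) i)
        = LinearMap.toMatrix' (fderiv ℝ Φ a : (Fin 3 → ℝ) →ₗ[ℝ] (Fin 3 → ℝ)) from ?_]
    · exact LinearMap.det_toMatrix' _
    · ext i j
      rw [LinearMap.toMatrix'_apply]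
      simp only [Matrix.of_apply, ContinuousLinearMap.coe_coe]
  rw [hmat, mul_comm]
  exact hptwise
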